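/- arXiv:2409.16055 — 7 statements merged into one kernel-verified Lean document; each statement's English description precedes it below -/
import Mathlib

section
/- Let k ≥ 2 be a natural number and let n be a positive multiple of k. Then the rank of the edge-vertex incidence matrix B_{C_n^k} of the k-uniform cycle C_n^k is at most n − k + 1; equivalently, the null space of B_{C_n^k} has dimension at least k − 1, spanned by the k − 1 linearly independent vectors x_{ω_k^j} for j = 1, ..., k−1, where ω_k = e^{2πi/k}. -/
open Finset

/-- The hyperedge set of the `k`-uniform cycle `C_n^k` on vertex set `ZMod n`. -/
def cycleEdges (n k : ℕ) [NeZero n] : Finset (Finset (ZMod n)) :=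
  Finset.univ.image (fun i : ZMod n => (Finset.range k).image (fun j : ℕ => i + (j : ZMod n)))

/-- The edge-vertex incidence matrix of the `k`-uniform cycle `C_n^k`. -/
def cycleIncidence (n k : ℕ) [NeZero n] :
    Matrix {e // e ∈ cycleEdges n k} (ZMod n) ℂ :=
  fun e v => if v ∈ e.1 then 1 else 0

lemma mem_ker_aux (k n : ℕ) [NeZero n] (hkn : k ≤ n) (z : ℂ)
    (hzk : z ^ k = 1) (hzn : z ^ n = 1) (hz1 : z ≠ 1) :
    (fun i : ZMod n => z ^ i.val) ∈ LinearMap.ker (cycleIncidence n k).mulVecLin := by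
  have hmod : ∀ a : ℕ, z ^ (a % n) = z ^ a := by
    intro a
    conv_rhs => rw [← Nat.mod_add_div a n]
    rw [pow_add, pow_mul, hzn, one_pow, mul_one]
  rw [LinearMap.mem_ker]
  funext e
  rw [Matrix.mulVecLin_apply]
  show ∑ v : ZMod n, cycleIncidence n k e v * z ^ v.val = 0
  have hsum : ∑ v : ZMod n, cycleIncidence n k e v * z ^ v.val
      = ∑ v ∈ e.1, z ^ v.val := by
    simp only [cycleIncidence, ite_mul, one_mul, zero_mul]
    rw [Finset.sum_ite_mem, Finset.univ_inter]
  rw [hsum]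
  obtain ⟨i, -, hi⟩ := Finset.mem_image.mp e.2
  rw [← hi]
  rw [Finset.sum_image]
  · have hterm : ∀ j ∈ Finset.range k, z ^ (i + (j : ZMod n)).val = z ^ i.val * z ^ j := by
      intro j _
      have hval : (i + (j : ZMod n)).val = (i.val + j) % n := by
        rw [ZMod.val_add, ZMod.val_natCast]
        conv_lhs => rw [Nat.add_mod]
        conv_rhs => rw [Nat.add_mod]
        rw [Nat.mod_mod_of_dvd _ dvd_rfl]
      rw [hval, hmod, pow_add]
    rw [Finset.sum_congr rfl hterm, ← Finset.mul_sum, geom_sum_eq hz1, hzk]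
    simp
  · intro a ha b hb hab
    simp only [Finset.mem_coe, Finset.mem_range] at ha hb
    have : (a : ZMod n) = (b : ZMod n) := add_left_cancel hab
    have ha' : ((a : ZMod n)).val = a := ZMod.val_cast_of_lt (lt_of_lt_of_le ha hkn)
    have hb' : ((b : ZMod n)).val = b := ZMod.val_cast_of_lt (lt_of_lt_of_le hb hkn)
    rw [← ha', ← hb', this]

/-- Let `k ≥ 2` and let `n` be a positive multiple of `k`.  Then the rank of the
edge-vertex incidence matrix of `C_n^k` is at most `n - k + 1`; equivalently, its null
space has dimension at least `k - 1`, spanned by the `k - 1` linearly independent vectors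
`x_{ω_k^j}` (`j = 1, ..., k-1`), where `ω_k = exp(2πi/k)` and `x_ω(i) = ω ^ i`. -/
theorem stmt1 (k n : ℕ) (hk : 2 ≤ k) [NeZero n] (hdvd : k ∣ n) :
    (cycleIncidence n k).rank ≤ n - k + 1 ∧
    k - 1 ≤ Module.finrank ℂ (LinearMap.ker (cycleIncidence n k).mulVecLin) ∧
    (∀ j : ℕ, 1 ≤ j → j ≤ k - 1 →
      (fun i : ZMod n => (Complex.exp (2 * (Real.pi : ℂ) * Complex.I / (k : ℂ)) ^ j) ^ i.val) ∈
        LinearMap.ker (cycleIncidence n k).mulVecLin) ∧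
    LinearIndependent ℂ (fun (j : Fin (k - 1)) (i : ZMod n) =>
      (Complex.exp (2 * (Real.pi : ℂ) * Complex.I / (k : ℂ)) ^ (j.val + 1)) ^ i.val) := by
  have hn : 0 < n := Nat.pos_of_ne_zero (NeZero.ne n)
  have hkn : k ≤ n := Nat.le_of_dvd hn hdvd
  set ω := Complex.exp (2 * (Real.pi : ℂ) * Complex.I / (k : ℂ)) with hω
  have hprim : IsPrimitiveRoot ω k := Complex.isPrimitiveRoot_exp k (by omega)
  -- membership in kernel
  have hker : ∀ j : ℕ, 1 ≤ j → j ≤ k - 1 →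
      (fun i : ZMod n => (ω ^ j) ^ i.val) ∈
        LinearMap.ker (cycleIncidence n k).mulVecLin := by
    intro j hj1 hj2
    apply mem_ker_aux k n hkn
    · rw [← pow_mul, mul_comm, pow_mul, hprim.pow_eq_one, one_pow]
    · obtain ⟨t, ht⟩ := hdvd
      have hωn : ω ^ n = 1 := by rw [ht, pow_mul, hprim.pow_eq_one, one_pow]
      rw [← pow_mul, mul_comm, pow_mul, hωn, one_pow]
    · exact hprim.pow_ne_one_of_pos_of_lt (by omega) (by omega)
  -- linear independence
  have hli : LinearIndependent ℂ (fun (j : Fin (k - 1)) (i : ZMod n) =>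
      (ω ^ (j.val + 1)) ^ i.val) := by
    set z : Fin (k - 1) → ℂ := fun j => ω ^ (j.val + 1) with hz
    have hinj : Function.Injective z := by
      intro a b hab
      have := hprim.pow_inj (i := a.val + 1) (j := b.val + 1)
        (by omega) (by omega) hab
      exact Fin.ext (by omega)
    have hvdm : LinearIndependent ℂ (fun j => Matrix.vandermonde z j) :=
      Matrix.linearIndependent_rows_iff_isUnit.2
        ((Matrix.isUnit_iff_isUnit_det _).2
          (isUnit_iff_ne_zero.2 (Matrix.det_vandermonde_ne_zero_iff.mpr hinj)))
    apply LinearIndependent.of_comp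
      (LinearMap.funLeft ℂ ℂ (fun m : Fin (k - 1) => ((m.val : ℕ) : ZMod n)))
    have heq : (LinearMap.funLeft ℂ ℂ (fun m : Fin (k - 1) => ((m.val : ℕ) : ZMod n))) ∘
        (fun (j : Fin (k - 1)) (i : ZMod n) => (ω ^ (j.val + 1)) ^ i.val)
        = fun j => Matrix.vandermonde z j := by
      funext j m
      have hm : m.val < n := by have := m.isLt; omega
      simp only [Function.comp_apply, LinearMap.funLeft_apply, Matrix.vandermonde,
        Matrix.of_apply, hz]
      rw [ZMod.val_cast_of_lt hm]
    rw [heq]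
    exact hvdm
  -- finrank lower bound
  have hfin : k - 1 ≤ Module.finrank ℂ (LinearMap.ker (cycleIncidence n k).mulVecLin) := by
    set K := LinearMap.ker (cycleIncidence n k).mulVecLin
    have hmem : ∀ j : Fin (k - 1),
        (fun i : ZMod n => (ω ^ (j.val + 1)) ^ i.val) ∈ K := fun j =>
      hker (j.val + 1) (by omega) (by omega)
    set F : Fin (k - 1) → K := fun j => ⟨_, hmem j⟩ with hF
    have hliF : LinearIndependent ℂ F := by
      apply LinearIndependent.of_comp K.subtype
      exact hli
    have := hliF.fintype_card_le_finrank
    simpa using this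
  refine ⟨?_, hfin, hker, hli⟩
  -- rank bound
  have hrk : (cycleIncidence n k).rank
      + Module.finrank ℂ (LinearMap.ker (cycleIncidence n k).mulVecLin)
      = Module.finrank ℂ (ZMod n → ℂ) :=
    LinearMap.finrank_range_add_finrank_ker _
  rw [Module.finrank_pi, ZMod.card] at hrk
  omega
end

section
/- Let k ≥ 2 be a natural number, let n ≥ k be a natural number, and let r = gcd(k, n). Then the rank of the edge-vertex incidence matrix B_{C_n^k} of the k-uniform cycle C_n^k is at most n − r + 1; in particular, for every r-th root of unity ω ≠ 1, the vector x_ω : ℤ_n → ℂ defined by x_ω(j) = ω^j lies in the null space of B_{C_n^k}, and the null space of B_{C_n^k} has dimension at least r − 1. -/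
open Finset

/-- Let `k ≥ 2`, `n ≥ k`, and `r = gcd(k, n)`.  Then the rank of the edge-vertex
incidence matrix of `C_n^k` is at most `n - r + 1`; in particular, for every `r`-th root
of unity `ω ≠ 1`, the vector `x_ω(j) = ω ^ j` lies in its null space, and the null space
has dimension at least `r - 1`. -/
theorem stmt2 (k n : ℕ) (hk : 2 ≤ k) (hkn : k ≤ n) [NeZero n]
    (r : ℕ) (hr : r = Nat.gcd k n) :
    (cycleIncidence n k).rank ≤ n - r + 1 ∧
    (∀ ω : ℂ, ω ≠ 1 → ω ^ r = 1 →
      (fun i : ZMod n => ω ^ i.val) ∈ LinearMap.ker (cycleIncidence n k).mulVecLin) ∧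
    r - 1 ≤ Module.finrank ℂ (LinearMap.ker (cycleIncidence n k).mulVecLin) := by
  have hnpos : 0 < n := Nat.pos_of_ne_zero (NeZero.ne n)
  have hrk : r ∣ k := hr ▸ Nat.gcd_dvd_left k n
  have hrn : r ∣ n := hr ▸ Nat.gcd_dvd_right k n
  have hrpos : 0 < r := hr ▸ Nat.gcd_pos_of_pos_right k hnpos
  have hrlen : r ≤ n := Nat.le_of_dvd hnpos hrn
  -- kernel membership
  have hker : ∀ ω : ℂ, ω ≠ 1 → ω ^ r = 1 →
      (fun i : ZMod n => ω ^ i.val) ∈ LinearMap.ker (cycleIncidence n k).mulVecLin := by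
    intro ω hω1 hωr
    have hωn : ω ^ n = 1 := by
      obtain ⟨c, hc⟩ := hrn; rw [hc, pow_mul, hωr, one_pow]
    have hωk : ω ^ k = 1 := by
      obtain ⟨c, hc⟩ := hrk; rw [hc, pow_mul, hωr, one_pow]
    have hmod : ∀ a : ℕ, ω ^ a = ω ^ (a % n) := by
      intro a
      conv_lhs => rw [← Nat.div_add_mod a n, pow_add, pow_mul, hωn, one_pow, one_mul]
    rw [LinearMap.mem_ker]
    funext e
    obtain ⟨e, he⟩ := e
    have he' := he
    simp only [cycleEdges, mem_image, mem_univ, true_and] at he'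
    obtain ⟨i, hi⟩ := he'
    show (cycleIncidence n k).mulVec _ ⟨e, he⟩ = 0
    rw [Matrix.mulVec, dotProduct]
    simp only [cycleIncidence, ite_mul, one_mul, zero_mul]
    rw [Finset.sum_ite_mem, Finset.univ_inter, ← hi]
    rw [Finset.sum_image (by
      intro a ha b hb hab
      have h := add_left_cancel hab
      have ha' : a < n := lt_of_lt_of_le (mem_range.mp ha) hkn
      have hb' : b < n := lt_of_lt_of_le (mem_range.mp hb) hkn
      have := congrArg ZMod.val h
      rwa [ZMod.val_natCast_of_lt ha', ZMod.val_natCast_of_lt hb'] at this)]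
    have hv : ∀ j : ℕ, ω ^ ((i + (j : ZMod n)).val) = ω ^ i.val * ω ^ j := by
      intro j
      have h1 : (i + (j : ZMod n)).val = (i.val + j) % n := by
        rw [ZMod.val_add, ZMod.val_natCast]
        exact Nat.ModEq.add_left i.val (Nat.mod_modEq j n)
      rw [h1, ← hmod, pow_add]
    simp only [hv]
    rw [← Finset.mul_sum, geom_sum_eq hω1, hωk, sub_self, zero_div, mul_zero]
  have hdim : r - 1 ≤ Module.finrank ℂ
      (LinearMap.ker (cycleIncidence n k).mulVecLin) := by
    have hζ := Complex.isPrimitiveRoot_exp r hrpos.ne'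
    set ζ := Complex.exp (2 * Real.pi * Complex.I / r) with hζdef
    set K := LinearMap.ker (cycleIncidence n k).mulVecLin with hK
    set v : Fin (r - 1) → (ZMod n → ℂ) :=
      fun m i => (ζ ^ ((m : ℕ) + 1)) ^ i.val with hv
    have hmem : ∀ m, v m ∈ K := by
      intro m
      refine hker _ (hζ.pow_ne_one_of_pos_of_lt (Nat.succ_ne_zero _) (by omega)) ?_
      rw [← pow_mul, mul_comm, pow_mul, hζ.pow_eq_one, one_pow]
    have hinj : Function.Injective (fun m : Fin (r - 1) => ζ ^ ((m : ℕ) + 1)) := by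
      intro a b hab
      have ha : (a : ℕ) + 1 < r := by omega
      have hb : (b : ℕ) + 1 < r := by omega
      have := hζ.pow_inj ha hb hab
      exact Fin.ext (by omega)
    have hrows : LinearIndependent ℂ
        (fun m => Matrix.vandermonde (fun m : Fin (r - 1) => ζ ^ ((m : ℕ) + 1)) m) :=
      Matrix.linearIndependent_rows_iff_isUnit.mpr
        ((Matrix.isUnit_iff_isUnit_det _).mpr
          (isUnit_iff_ne_zero.mpr (Matrix.det_vandermonde_ne_zero_iff.mpr hinj)))
    set π : (ZMod n → ℂ) →ₗ[ℂ] (Fin (r - 1) → ℂ) :=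
      LinearMap.funLeft ℂ ℂ (fun j : Fin (r - 1) => ((j : ℕ) : ZMod n)) with hπ
    have hvind : LinearIndependent ℂ v := by
      apply LinearIndependent.of_comp π
      have : π ∘ v = fun m =>
          Matrix.vandermonde (fun m : Fin (r - 1) => ζ ^ ((m : ℕ) + 1)) m := by
        funext m j
        simp only [Function.comp_apply, hπ, LinearMap.funLeft_apply, hv,
          Matrix.vandermonde]
        rw [ZMod.val_natCast_of_lt (by omega)]; rfl
      rw [this]
      exact hrows
    set w : Fin (r - 1) → K := fun m => ⟨v m, hmem m⟩ with hw
    have hwind : LinearIndependent ℂ w := by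
      apply LinearIndependent.of_comp K.subtype
      exact hvind
    have := hwind.fintype_card_le_finrank
    simpa using this
  refine ⟨?_, hker, hdim⟩
  -- rank bound
  · have hrank := LinearMap.finrank_range_add_finrank_ker (cycleIncidence n k).mulVecLin
    rw [Module.finrank_fintype_fun_eq_card, ZMod.card] at hrank
    have : (cycleIncidence n k).rank =
        Module.finrank ℂ (LinearMap.range (cycleIncidence n k).mulVecLin) := rfl
    omega
end

section
/- Let H be a hypergraph and suppose there exists U ⊆ V(H) such that the sub-hypergraph of H induced by U is isomorphic to the k-uniform cycle C_n^k for some k ≥ 2 and n ≥ k with gcd(k, n) = r. Then the dimension of the null space of the edge-vertex incidence matrix B_H is at least r − 1. -/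
open Finset

/-- The edge-vertex incidence matrix of a hypergraph with edge set `E`. -/
def incidence {V : Type*} [DecidableEq V] (E : Finset (Finset V)) :
    Matrix {e // e ∈ E} V ℂ :=
  fun e v => if v ∈ e.1 then 1 else 0

/-- The hyperedge set of the sub-hypergraph of `H` induced by `U`. -/
def inducedEdges {V : Type*} [DecidableEq V] (E : Finset (Finset V)) (U : Finset V) :
    Finset (Finset V) :=
  (E.filter (fun e => (e ∩ U).Nonempty)).image (fun e => e ∩ U)

/-- If a hypergraph `H` has a subset `U ⊆ V(H)` whose induced sub-hypergraph is
isomorphic to the `k`-uniform cycle `C_n^k` (`k ≥ 2`, `n ≥ k`, `gcd(k,n) = r`), then the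
null space of the edge-vertex incidence matrix `B_H` has dimension at least `r - 1`. -/
theorem stmt4 {V : Type*} [Fintype V] [DecidableEq V]
    (E : Finset (Finset V)) (hE : ∀ e ∈ E, e.Nonempty)
    (k n : ℕ) (hk : 2 ≤ k) (hkn : k ≤ n) [NeZero n]
    (r : ℕ) (hr : r = Nat.gcd k n)
    (U : Finset V) (f : {v // v ∈ U} ≃ ZMod n)
    (hf : ∀ s : Finset {v // v ∈ U},
      s.image Subtype.val ∈ inducedEdges E U ↔ s.image f ∈ cycleEdges n k) :
    r - 1 ≤ Module.finrank ℂ (LinearMap.ker (incidence E).mulVecLin) := by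
  rcases Nat.lt_or_ge r 2 with hr2 | hr2
  · omega
  have hn : 0 < n := Nat.pos_of_ne_zero (NeZero.ne n)
  have hrk : r ∣ k := hr ▸ Nat.gcd_dvd_left k n
  have hrn : r ∣ n := hr ▸ Nat.gcd_dvd_right k n
  have hrpos : 0 < r := by omega
  have hrlen : r ≤ n := Nat.le_of_dvd hn hrn
  set d := n / r with hd
  have hdr : d * r = n := Nat.div_mul_cancel hrn
  have hdpos : 0 < d := Nat.div_pos hrlen hrpos
  set ζ := Complex.exp (2 * Real.pi * Complex.I / n) with hζdef
  have hζ : IsPrimitiveRoot ζ n := Complex.isPrimitiveRoot_exp n (NeZero.ne n)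
  set ω : Fin (r - 1) → ℂ := fun t => ζ ^ (d * (t.1 + 1)) with hωdef
  have hexp_pos : ∀ t : Fin (r - 1), 0 < d * (t.1 + 1) := fun t => by positivity
  have hexp_lt : ∀ t : Fin (r - 1), d * (t.1 + 1) < n := by
    intro t
    have h1 : t.1 + 1 ≤ r - 1 := t.2
    calc d * (t.1 + 1) ≤ d * (r - 1) := Nat.mul_le_mul_left d h1
      _ < d * r := (Nat.mul_lt_mul_left hdpos).2 (by omega)
      _ = n := hdr
  have hω_ne_one : ∀ t, ω t ≠ 1 := by
    intro t h
    rw [hωdef] at h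
    rw [hζ.pow_eq_one_iff_dvd] at h
    have := Nat.le_of_dvd (hexp_pos t) h
    exact absurd this (not_le.2 (hexp_lt t))
  have hω_pow_n : ∀ t, ω t ^ n = 1 := by
    intro t
    rw [hωdef, ← pow_mul, hζ.pow_eq_one_iff_dvd]
    exact dvd_mul_left n _
  have hω_pow_k : ∀ t, ω t ^ k = 1 := by
    intro t
    rw [hωdef, ← pow_mul, hζ.pow_eq_one_iff_dvd]
    obtain ⟨m, hm⟩ := hrk
    exact ⟨(t.1 + 1) * m, by rw [← hdr, hm]; ring⟩
  have hωinj : Function.Injective ω := by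
    intro a b hab
    have h1 := hζ.pow_inj (hexp_lt a) (hexp_lt b) hab
    have h2 : a.1 + 1 = b.1 + 1 := Nat.eq_of_mul_eq_mul_left hdpos h1
    exact Fin.ext (by omega)
  set χ : Fin (r - 1) → ZMod n → ℂ := fun t m => ω t ^ m.val with hχdef
  have hχ_add : ∀ t a b, χ t (a + b) = χ t a * χ t b := by
    intro t a b
    show ω t ^ (a + b).val = ω t ^ a.val * ω t ^ b.val
    rw [ZMod.val_add, ← pow_eq_pow_mod _ (hω_pow_n t), pow_add]
  have hχ_cast : ∀ t (j : ℕ), j < n → χ t ((j : ℕ) : ZMod n) = ω t ^ j := by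
    intro t j hj
    show ω t ^ (((j : ℕ) : ZMod n)).val = _
    rw [ZMod.val_cast_of_lt hj]
  have hgeom : ∀ t, ∑ j ∈ range k, ω t ^ j = 0 := by
    intro t
    rw [geom_sum_eq (hω_ne_one t), hω_pow_k t, sub_self, zero_div]
  set x : Fin (r - 1) → V → ℂ := fun t v => if h : v ∈ U then χ t (f ⟨v, h⟩) else 0 with hxdef
  -- kernel membership
  have hker : ∀ t, (incidence E).mulVecLin (x t) = 0 := by
    intro t
    ext e
    simp only [Matrix.mulVecLin_apply, Pi.zero_apply]
    show ∑ v, incidence E e v * x t v = 0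
    have step1 : ∑ v, incidence E e v * x t v = ∑ v ∈ U, incidence E e v * x t v := by
      refine (Finset.sum_subset (Finset.subset_univ U) ?_).symm
      intro v _ hv
      simp [hxdef, hv]
    have step2 : ∑ v ∈ U, incidence E e v * x t v
        = ∑ v ∈ U.attach, incidence E e v.1 * x t v.1 :=
      (Finset.sum_attach U _).symm
    have step3 : ∑ v ∈ U.attach, incidence E e v.1 * x t v.1
        = ∑ v ∈ U.attach.filter (fun u => u.1 ∈ e.1), χ t (f v) := by
      rw [Finset.sum_filter]
      refine Finset.sum_congr rfl ?_
      intro v _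
      by_cases hv : v.1 ∈ e.1 <;> simp [incidence, hxdef, hv]
    rw [step1, step2, step3]
    set s : Finset {v // v ∈ U} := U.attach.filter (fun u => u.1 ∈ e.1) with hs
    have hsimg : s.image Subtype.val = e.1 ∩ U := by
      ext a
      simp only [hs, Finset.mem_image, Finset.mem_filter, Finset.mem_attach, true_and,
        Finset.mem_inter]
      constructor
      · rintro ⟨b, hb, rfl⟩
        exact ⟨hb, b.2⟩
      · rintro ⟨h1, h2⟩
        exact ⟨⟨a, h2⟩, h1, rfl⟩
    by_cases hne : (e.1 ∩ U).Nonempty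
    · have hmem : e.1 ∩ U ∈ inducedEdges E U :=
        Finset.mem_image.2 ⟨e.1, Finset.mem_filter.2 ⟨e.2, hne⟩, rfl⟩
      have hcyc := (hf s).1 (by rw [hsimg]; exact hmem)
      rw [cycleEdges, Finset.mem_image] at hcyc
      obtain ⟨i, -, hi⟩ := hcyc
      have h1 : ∑ v ∈ s, χ t (f v) = ∑ m ∈ s.image f, χ t m :=
        (Finset.sum_image (fun a _ b _ h => f.injective h)).symm
      rw [h1, ← hi]
      have hinj : ∀ a ∈ range k, ∀ b ∈ range k,
          i + (a : ZMod n) = i + (b : ZMod n) → a = b := by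
        intro a ha b hb h
        have h' : ((a : ℕ) : ZMod n) = ((b : ℕ) : ZMod n) := by
          exact add_left_cancel h
        have := congrArg ZMod.val h'
        rwa [ZMod.val_cast_of_lt (lt_of_lt_of_le (Finset.mem_range.1 ha) hkn),
          ZMod.val_cast_of_lt (lt_of_lt_of_le (Finset.mem_range.1 hb) hkn)] at this
      rw [Finset.sum_image hinj]
      have hterm : ∀ j ∈ range k, χ t (i + (j : ZMod n)) = χ t i * ω t ^ j := by
        intro j hj
        rw [hχ_add, hχ_cast t j (lt_of_lt_of_le (Finset.mem_range.1 hj) hkn)]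
      rw [Finset.sum_congr rfl hterm, ← Finset.mul_sum, hgeom, mul_zero]
    · have hempty : s = ∅ := by
        have := Finset.not_nonempty_iff_eq_empty.1 hne
        exact Finset.image_eq_empty.1 (by rw [hsimg, this])
      simp [hempty]
  -- linear independence
  have hx_li : LinearIndependent ℂ x := by
    rw [Fintype.linearIndependent_iff]
    intro c hc
    have hev : ∀ m : ZMod n, ∑ t, c t * χ t m = 0 := by
      intro m
      have h0 := congrFun hc (f.symm m).1
      simp only [Finset.sum_apply, Pi.smul_apply, smul_eq_mul, Pi.zero_apply] at h0
      have hx : ∀ t, x t ((f.symm m).1) = χ t m := by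
        intro t
        show (if h : (f.symm m).1 ∈ U then χ t (f ⟨(f.symm m).1, h⟩) else 0) = χ t m
        rw [dif_pos (f.symm m).2]
        congr 1
        have : (⟨(f.symm m).1, (f.symm m).2⟩ : {v // v ∈ U}) = f.symm m := rfl
        rw [this, Equiv.apply_symm_apply]
      simp only [hx] at h0
      exact h0
    have hvec : Matrix.vecMul c (Matrix.vandermonde ω) = 0 := by
      ext j
      have hjlt : (j : ℕ) < n := by omega
      have := hev (((j : ℕ) : ℕ) : ZMod n)
      simp only [hχ_cast _ (j : ℕ) hjlt] at this
      simpa [Matrix.vecMul, dotProduct, Matrix.vandermonde] using this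
    have hM : (Matrix.vandermonde ω).det ≠ 0 := Matrix.det_vandermonde_ne_zero_iff.2 hωinj
    have hu : IsUnit (Matrix.vandermonde ω).det := isUnit_iff_ne_zero.2 hM
    intro i
    have h2 := congrArg (fun w => Matrix.vecMul w (Matrix.vandermonde ω)⁻¹) hvec
    simp only [Matrix.vecMul_vecMul, Matrix.mul_nonsing_inv _ hu, Matrix.vecMul_one,
      Matrix.zero_vecMul] at h2
    exact congrFun h2 i
  have hy : LinearIndependent ℂ
      (fun t => (⟨x t, LinearMap.mem_ker.2 (hker t)⟩ :
        LinearMap.ker (incidence E).mulVecLin)) :=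
    LinearIndependent.of_comp (LinearMap.ker (incidence E).mulVecLin).subtype hx_li
  have hcard := hy.fintype_card_le_finrank
  simpa using hcard
end

section
/- Let H be a hypergraph. Then the dimension of the null space of the edge-vertex incidence matrix B_H is at least the dimension of the null space of the edge-vertex incidence matrix B_{H/𝓡_u(H)} of the unit-contraction of H. -/
open Finset

/-- The star of a vertex `v`: the set of hyperedges containing `v`. -/
def edgeStar {V : Type*} [DecidableEq V] (E : Finset (Finset V)) (v : V) :
    Finset (Finset V) :=
  E.filter (fun e => v ∈ e)

/-- The unit of the vertex `v`: the set of vertices with the same star as `v`. -/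
def unitOf {V : Type*} [Fintype V] [DecidableEq V] (E : Finset (Finset V)) (v : V) :
    Finset V :=
  Finset.univ.filter (fun u => edgeStar E u = edgeStar E v)

/-- The set of all units of the hypergraph. -/
def unitsFinset {V : Type*} [Fintype V] [DecidableEq V] (E : Finset (Finset V)) :
    Finset (Finset V) :=
  Finset.univ.image (unitOf E)

/-- The hyperedge set of the unit-contraction `H/𝓡_u(H)`. -/
def contractEdges {V : Type*} [Fintype V] [DecidableEq V] (E : Finset (Finset V)) :
    Finset (Finset (Finset V)) :=
  E.image (fun e => e.image (unitOf E))

/-- The edge-vertex incidence matrix of the unit-contraction `H/𝓡_u(H)`. -/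
def contractIncidence {V : Type*} [Fintype V] [DecidableEq V] (E : Finset (Finset V)) :
    Matrix {e // e ∈ contractEdges E} {W // W ∈ unitsFinset E} ℂ :=
  fun e W => if W.1 ∈ e.1 then 1 else 0

section Aux
variable {V : Type*} [Fintype V] [DecidableEq V] (E : Finset (Finset V))

lemma mem_unitOf_self (v : V) : v ∈ unitOf E v := by simp [unitOf]

lemma unitOf_mem_unitsFinset (v : V) : unitOf E v ∈ unitsFinset E :=
  Finset.mem_image_of_mem _ (Finset.mem_univ v)

lemma unitOf_eq_of_mem {u v : V} (h : u ∈ unitOf E v) : unitOf E u = unitOf E v := by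
  simp only [unitOf, Finset.mem_filter] at h ⊢
  ext w; simp [unitOf, h.2]

lemma unitOf_card_ne_zero (v : V) : ((unitOf E v).card : ℂ) ≠ 0 := by
  have h : 0 < (unitOf E v).card := Finset.card_pos.mpr ⟨v, mem_unitOf_self E v⟩
  exact_mod_cast h.ne'

lemma mem_edge_of_mem_unitOf {e : Finset V} (he : e ∈ E) {c v : V} (hc : c ∈ e)
    (hv : v ∈ unitOf E c) : v ∈ e := by
  simp only [unitOf, Finset.mem_filter] at hv
  have h : e ∈ edgeStar E c := Finset.mem_filter.mpr ⟨he, hc⟩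
  rw [← hv.2] at h
  exact (Finset.mem_filter.mp h).2

lemma filter_unitOf {e : Finset V} (he : e ∈ E) {c : V} (hc : c ∈ e) :
    e.filter (fun v => unitOf E v = unitOf E c) = unitOf E c := by
  ext v
  simp only [Finset.mem_filter]
  constructor
  · rintro ⟨_, h⟩; rw [← h]; exact mem_unitOf_self E v
  · intro hv
    exact ⟨mem_edge_of_mem_unitOf E he hc hv, unitOf_eq_of_mem E hv⟩

/-- The map spreading the value of a unit evenly over its vertices. -/
noncomputable def spread : ({W // W ∈ unitsFinset E} → ℂ) →ₗ[ℂ] (V → ℂ) where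
  toFun x := fun v => x ⟨unitOf E v, unitOf_mem_unitsFinset E v⟩ / ((unitOf E v).card : ℂ)
  map_add' x y := by ext v; simp [add_div]
  map_smul' c x := by ext v; simp [mul_div_assoc]

lemma spread_injective : Function.Injective (spread E) := by
  intro x y h
  funext W
  obtain ⟨u, -, hu⟩ := Finset.mem_image.mp W.2
  have h' := congrFun h u
  simp only [spread, LinearMap.coe_mk, AddHom.coe_mk,
    div_eq_div_iff (unitOf_card_ne_zero E u) (unitOf_card_ne_zero E u)] at h'
  have h2 := mul_right_cancel₀ (unitOf_card_ne_zero E u) h'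
  have hW : W = ⟨unitOf E u, unitOf_mem_unitsFinset E u⟩ := Subtype.ext hu.symm
  rw [hW]; exact h2

lemma sum_spread {e : Finset V} (he : e ∈ E) (x : {W // W ∈ unitsFinset E} → ℂ) :
    ∑ v ∈ e, spread E x v
      = ∑ W ∈ e.image (unitOf E),
          (if h : W ∈ unitsFinset E then x ⟨W, h⟩ else 0) := by
  rw [Finset.sum_image']
  intro c hc
  rw [dif_pos (unitOf_mem_unitsFinset E c), filter_unitOf E he hc]
  have h : ∀ v ∈ unitOf E c, spread E x v
      = x ⟨unitOf E c, unitOf_mem_unitsFinset E c⟩ / ((unitOf E c).card : ℂ) := by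
    intro v hv
    have h1 := unitOf_eq_of_mem E hv
    simp only [spread, LinearMap.coe_mk, AddHom.coe_mk]
    rw [congrArg x (Subtype.ext h1 :
      (⟨unitOf E v, unitOf_mem_unitsFinset E v⟩ : {W // W ∈ unitsFinset E})
        = ⟨unitOf E c, unitOf_mem_unitsFinset E c⟩), h1]
  rw [Finset.sum_congr rfl h, Finset.sum_const, nsmul_eq_mul,
    mul_div_cancel₀ _ (unitOf_card_ne_zero E c)]

lemma image_subset_units {e : Finset V} : e.image (unitOf E) ⊆ unitsFinset E := by
  intro W hW
  obtain ⟨u, -, hu⟩ := Finset.mem_image.mp hW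
  exact hu ▸ unitOf_mem_unitsFinset E u

lemma sum_subtype_ite {s : Finset (Finset V)} (hs : s ⊆ unitsFinset E)
    (x : {W // W ∈ unitsFinset E} → ℂ) :
    ∑ W : {W // W ∈ unitsFinset E}, (if W.1 ∈ s then x W else 0)
      = ∑ W ∈ s, (if h : W ∈ unitsFinset E then x ⟨W, h⟩ else 0) := by
  classical
  set g : Finset V → ℂ := fun W =>
    if h : W ∈ unitsFinset E then (if W ∈ s then x ⟨W, h⟩ else 0) else 0 with hg
  have h1 : ∑ W : {W // W ∈ unitsFinset E}, (if W.1 ∈ s then x W else 0)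
      = ∑ W ∈ unitsFinset E, g W := by
    rw [← Finset.sum_coe_sort (unitsFinset E) g]
    refine Finset.sum_congr rfl fun W _ => ?_
    simp only [hg, dif_pos W.2]
  rw [h1]
  have h2 : ∀ W ∈ unitsFinset E, g W
      = if W ∈ s then (if h : W ∈ unitsFinset E then x ⟨W, h⟩ else 0) else 0 := by
    intro W hW
    simp only [hg, dif_pos hW]
  rw [Finset.sum_congr rfl h2, ← Finset.sum_filter, Finset.filter_mem_eq_inter,
    Finset.inter_eq_right.mpr hs]

end Aux

/-- Let `H` be a hypergraph.  The dimension of the null space of `B_H` is at least the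
dimension of the null space of `B_{H/𝓡_u(H)}` of the unit-contraction of `H`. -/
theorem stmt10 {V : Type*} [Fintype V] [DecidableEq V]
    (E : Finset (Finset V)) (hE : ∀ e ∈ E, e.Nonempty) :
    Module.finrank ℂ (LinearMap.ker (contractIncidence E).mulVecLin) ≤
      Module.finrank ℂ (LinearMap.ker (incidence E).mulVecLin) := by
  classical
  have hmap : ∀ x ∈ LinearMap.ker (contractIncidence E).mulVecLin,
      spread E x ∈ LinearMap.ker (incidence E).mulVecLin := by
    intro x hx
    rw [LinearMap.mem_ker] at hx ⊢
    funext e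
    have he : e.1 ∈ E := e.2
    have hEe : e.1.image (unitOf E) ∈ contractEdges E := Finset.mem_image_of_mem _ he
    have hx' := congrFun hx ⟨_, hEe⟩
    simp only [Matrix.mulVecLin_apply, Matrix.mulVec, dotProduct,
      contractIncidence, ite_mul, one_mul, zero_mul, Pi.zero_apply] at hx'
    rw [sum_subtype_ite E (image_subset_units E) x] at hx'
    simp only [Matrix.mulVecLin_apply, Matrix.mulVec, dotProduct,
      incidence, ite_mul, one_mul, zero_mul, Pi.zero_apply]
    rw [Finset.sum_ite_mem, Finset.univ_inter, sum_spread E he x, hx']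
  have hinj : Function.Injective
      ((spread E).restrict hmap) := by
    intro a b h
    have h' : spread E a.1 = spread E b.1 := congrArg Subtype.val h
    exact Subtype.ext (spread_injective E h')
  exact LinearMap.finrank_le_finrank_of_injective hinj
end

section
/- Let H be a hypergraph and let W ⊆ V(H) with |W| ≥ 2. Then W is a unit of H if and only if W is a maximal subset of V(H) (with respect to inclusion) such that the subspace S_W = {x : V(H) → ℂ : x(v) = 0 for all v ∉ W and ∑_{v ∈ W} x(v) = 0} is contained in the null space of B_H. -/
open Finset

/-- `SW E W` says that the subspace `S_W = {x : V → ℂ : x(v) = 0 for v ∉ W and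
∑_{v ∈ W} x(v) = 0}` is contained in the null space of `B_H`. -/
def SWinKer {V : Type*} [Fintype V] [DecidableEq V] (E : Finset (Finset V))
    (W : Finset V) : Prop :=
  ∀ x : V → ℂ, (∀ v, v ∉ W → x v = 0) → ∑ v ∈ W, x v = 0 →
    (incidence E).mulVec x = 0

lemma mulVec_apply {V : Type*} [Fintype V] [DecidableEq V] (E : Finset (Finset V))
    (x : V → ℂ) (e : {e // e ∈ E}) :
    (incidence E).mulVec x e = ∑ v ∈ e.1, x v := by
  simp only [Matrix.mulVec, dotProduct, incidence, ite_mul, one_mul, zero_mul]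
  rw [Finset.sum_ite_mem, Finset.univ_inter]

lemma key {V : Type*} [Fintype V] [DecidableEq V] {E : Finset (Finset V)}
    {W : Finset V} (h : SWinKer E W) {e : Finset V} (he : e ∈ E)
    {a b : V} (ha : a ∈ W) (hae : a ∈ e) (hb : b ∈ W) : b ∈ e := by
  by_contra hbe
  have hab : a ≠ b := fun h' => hbe (h' ▸ hae)
  set x : V → ℂ := fun v => (if v = a then 1 else 0) + (if v = b then -1 else 0) with hx
  have h1 : ∀ v, v ∉ W → x v = 0 := by
    intro v hv
    simp only [hx]
    rw [if_neg (by rintro rfl; exact hv ha), if_neg (by rintro rfl; exact hv hb), add_zero]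
  have h2 : ∑ v ∈ W, x v = 0 := by
    simp only [hx, Finset.sum_add_distrib, Finset.sum_ite_eq' W, ha, hb, if_pos]
    ring
  have h3 := congrFun (h x h1 h2) ⟨e, he⟩
  rw [mulVec_apply] at h3
  simp only [hx, Finset.sum_add_distrib, Finset.sum_ite_eq' e, hae, if_pos,
    if_neg hbe, Pi.zero_apply] at h3
  norm_num at h3

lemma swinker_iff {V : Type*} [Fintype V] [DecidableEq V] (E : Finset (Finset V))
    (W : Finset V) :
    SWinKer E W ↔ ∀ u ∈ W, ∀ w ∈ W, edgeStar E u = edgeStar E w := by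
  constructor
  · intro h u hu w hw
    ext e
    simp only [edgeStar, Finset.mem_filter]
    exact ⟨fun ⟨he, hue⟩ => ⟨he, key h he hu hue hw⟩,
      fun ⟨he, hwe⟩ => ⟨he, key h he hw hwe hu⟩⟩
  · intro h x hx hsum
    funext e
    rw [mulVec_apply]
    have : ∑ v ∈ e.1, x v = ∑ v ∈ e.1 ∩ W, x v := by
      rw [← Finset.sum_filter_add_sum_filter_not e.1 (· ∈ W) x]
      rw [Finset.filter_mem_eq_inter]
      have : ∑ v ∈ e.1.filter (· ∉ W), x v = 0 :=
        Finset.sum_eq_zero fun v hv => hx v (Finset.mem_filter.mp hv).2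
      rw [this, add_zero]
    rw [this]
    by_cases hne : (e.1 ∩ W).Nonempty
    · obtain ⟨u, hu⟩ := hne
      rw [Finset.mem_inter] at hu
      have hWe : e.1 ∩ W = W := by
        apply Finset.inter_eq_right.mpr
        intro w hw
        have heu : e.1 ∈ edgeStar E u := Finset.mem_filter.mpr ⟨e.2, hu.1⟩
        rw [h u hu.2 w hw] at heu
        exact (Finset.mem_filter.mp heu).2
      rw [hWe]
      exact hsum
    · rw [Finset.not_nonempty_iff_eq_empty.mp hne, Finset.sum_empty]
      rfl


/-- Let `H` be a hypergraph and `W ⊆ V(H)` with `|W| ≥ 2`.  Then `W` is a unit of `H`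
iff `W` is a maximal subset of `V(H)` (w.r.t. inclusion) such that `S_W` is contained in
the null space of `B_H`. -/
theorem stmt12 {V : Type*} [Fintype V] [DecidableEq V]
    (E : Finset (Finset V)) (hE : ∀ e ∈ E, e.Nonempty)
    (W : Finset V) (hW : 2 ≤ W.card) :
    W ∈ unitsFinset E ↔
      (SWinKer E W ∧ ∀ W' : Finset V, W ⊂ W' → ¬ SWinKer E W') := by
  constructor
  · intro h
    obtain ⟨v, -, rfl⟩ := Finset.mem_image.mp h
    have hmem : ∀ u, u ∈ unitOf E v ↔ edgeStar E u = edgeStar E v := by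
      intro u; simp [unitOf]
    have hvW : v ∈ unitOf E v := (hmem v).mpr rfl
    constructor
    · rw [swinker_iff]
      intro u hu w hw
      rw [(hmem u).mp hu, (hmem w).mp hw]
    · intro W' hsub hker
      obtain ⟨w, hw', hwn⟩ := Finset.exists_of_ssubset hsub
      have hv' : v ∈ W' := hsub.subset hvW
      have := (swinker_iff E W').mp hker w hw' v hv'
      exact hwn ((hmem w).mpr this)
  · rintro ⟨h1, h2⟩
    obtain ⟨v, hv⟩ := Finset.card_pos.mp (by omega : 0 < W.card)
    have hsub : W ⊆ unitOf E v := by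
      intro u hu
      simp only [unitOf, Finset.mem_filter, Finset.mem_univ, true_and]
      exact (swinker_iff E W).mp h1 u hu v hv
    have heq : W = unitOf E v := by
      by_contra hne
      apply h2 (unitOf E v) ⟨hsub, fun hle => hne (Finset.Subset.antisymm hsub hle)⟩
      rw [swinker_iff]
      intro u hu w hw
      simp only [unitOf, Finset.mem_filter] at hu hw
      rw [hu.2, hw.2]
    exact heq ▸ Finset.mem_image.mpr ⟨v, Finset.mem_univ v, rfl⟩
end

section
/- Let H be a hypergraph with set of units 𝔘(H). Then the dimension of the null space of the edge-vertex incidence matrix B_H is at least |V(H)| − |𝔘(H)|. -/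
open Finset Matrix

lemma unitOf_eq_imp_edgeStar_eq {V : Type*} [Fintype V] [DecidableEq V]
    (E : Finset (Finset V)) {u v : V} (h : unitOf E u = unitOf E v) :
    edgeStar E u = edgeStar E v := by
  have hu : u ∈ unitOf E u := by simp [unitOf]
  rw [h] at hu
  simpa [unitOf] using hu

lemma rank_transpose_le {V : Type*} [Fintype V] [DecidableEq V]
    (E : Finset (Finset V)) :
    (incidence E)ᵀ.rank ≤ (unitsFinset E).card := by
  classical
  let q : V → {s // s ∈ unitsFinset E} :=
    fun v => ⟨unitOf E v, Finset.mem_image_of_mem _ (Finset.mem_univ v)⟩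
  let L : ({s // s ∈ unitsFinset E} → ℂ) →ₗ[ℂ] (V → ℂ) := LinearMap.funLeft ℂ ℂ q
  have hrange : LinearMap.range (incidence E)ᵀ.mulVecLin ≤ LinearMap.range L := by
    rintro f ⟨y, rfl⟩
    -- for each unit pick a representative vertex
    have hrep : ∀ s : {s // s ∈ unitsFinset E}, ∃ v : V, unitOf E v = s.1 := by
      rintro ⟨s, hs⟩
      rcases Finset.mem_image.mp hs with ⟨v, _, hv⟩
      exact ⟨v, hv⟩
    choose rep hrep using hrep
    refine ⟨fun s => (incidence E)ᵀ.mulVecLin y (rep s), ?_⟩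
    funext v
    have hstar : edgeStar E (rep (q v)) = edgeStar E v :=
      unitOf_eq_imp_edgeStar_eq E (hrep (q v))
    have hmem : ∀ e : {e // e ∈ E}, (v ∈ e.1) ↔ (rep (q v) ∈ e.1) := by
      intro e
      have h1 : e.1 ∈ edgeStar E v ↔ e.1 ∈ edgeStar E (rep (q v)) := by rw [hstar]
      simpa [edgeStar, e.2] using h1
    simp only [L, q, LinearMap.funLeft_apply]
    simp only [Matrix.mulVecLin_apply, Matrix.mulVec, Matrix.transpose_apply, incidence,
      dotProduct]
    refine Finset.sum_congr rfl fun e _ => ?_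
    rw [if_congr (hmem e) rfl rfl]
  have h1 : (incidence E)ᵀ.rank ≤ Module.finrank ℂ (LinearMap.range L) :=
    Submodule.finrank_mono hrange
  have h2 : Module.finrank ℂ (LinearMap.range L) ≤
      Module.finrank ℂ ({s // s ∈ unitsFinset E} → ℂ) :=
    LinearMap.finrank_range_le L
  calc (incidence E)ᵀ.rank ≤ Module.finrank ℂ ({s // s ∈ unitsFinset E} → ℂ) := h1.trans h2
    _ = (unitsFinset E).card := by
        rw [Module.finrank_fintype_fun_eq_card, Fintype.card_coe]

/-- Let `H` be a hypergraph with set of units `𝔘(H)`.  The dimension of the null space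
of the edge-vertex incidence matrix `B_H` is at least `|V(H)| − |𝔘(H)|`. -/
theorem stmt13 {V : Type*} [Fintype V] [DecidableEq V]
    (E : Finset (Finset V)) (hE : ∀ e ∈ E, e.Nonempty) :
    Fintype.card V - (unitsFinset E).card ≤
      Module.finrank ℂ (LinearMap.ker (incidence E).mulVecLin) := by
  classical
  have hrn : (incidence E).rank +
      Module.finrank ℂ (LinearMap.ker (incidence E).mulVecLin) = Fintype.card V := by
    have := LinearMap.finrank_range_add_finrank_ker (incidence E).mulVecLin
    rwa [Module.finrank_fintype_fun_eq_card] at this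
  have hrank : (incidence E).rank ≤ (unitsFinset E).card := by
    rw [← Matrix.rank_transpose]
    exact rank_transpose_le E
  omega
end

section
/- Let H be a hypergraph with set of units 𝔘(H). Then the dimension of the null space of B_H equals the dimension of the null space of B_{H/𝓡_u(H)} plus |V(H)| − |𝔘(H)|, where H/𝓡_u(H) is the unit-contraction of H. -/
open Finset

-- key membership lemma
lemma unit_mem_image_iff {V : Type*} [Fintype V] [DecidableEq V]
    (E : Finset (Finset V)) {e : Finset V} (he : e ∈ E) (v : V) :
    unitOf E v ∈ e.image (unitOf E) ↔ v ∈ e := by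
  constructor
  · intro h
    obtain ⟨u, hu, heq⟩ := Finset.mem_image.mp h
    have hv : v ∈ unitOf E v := by simp [unitOf]
    rw [← heq] at hv
    have hstar : edgeStar E v = edgeStar E u := (Finset.mem_filter.mp hv).2
    have : e ∈ edgeStar E u := Finset.mem_filter.mpr ⟨he, hu⟩
    rw [← hstar] at this
    exact (Finset.mem_filter.mp this).2
  · intro h; exact Finset.mem_image_of_mem _ h

lemma edgeMap_inj {V : Type*} [Fintype V] [DecidableEq V]
    (E : Finset (Finset V)) {e₁ e₂ : Finset V} (h1 : e₁ ∈ E) (h2 : e₂ ∈ E)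
    (h : e₁.image (unitOf E) = e₂.image (unitOf E)) : e₁ = e₂ := by
  ext v
  rw [← unit_mem_image_iff E h1 v, ← unit_mem_image_iff E h2 v, h]

noncomputable def edgeEquiv {V : Type*} [Fintype V] [DecidableEq V] (E : Finset (Finset V)) :
    {e // e ∈ E} ≃ {e' // e' ∈ contractEdges E} :=
  Equiv.ofBijective (fun e => ⟨e.1.image (unitOf E), Finset.mem_image_of_mem _ e.2⟩)
    ⟨fun e₁ e₂ h => Subtype.ext (edgeMap_inj E e₁.2 e₂.2 (Subtype.ext_iff.mp h)),
     fun e' => by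
      obtain ⟨e, he, heq⟩ := Finset.mem_image.mp e'.2
      exact ⟨⟨e, he⟩, Subtype.ext heq⟩⟩

lemma rank_eq {V : Type*} [Fintype V] [DecidableEq V] (E : Finset (Finset V)) :
    Module.finrank ℂ (LinearMap.range (incidence E).mulVecLin) =
      Module.finrank ℂ (LinearMap.range (contractIncidence E).mulVecLin) := by
  rw [Matrix.range_mulVecLin, Matrix.range_mulVecLin]
  set f := LinearEquiv.funCongrLeft ℂ ℂ (edgeEquiv E).symm with hf
  have himg : (⇑f) '' Set.range ((incidence E).transpose) = Set.range ((contractIncidence E).transpose) := by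
    ext x
    constructor
    · rintro ⟨_, ⟨v, rfl⟩, rfl⟩
      refine ⟨⟨unitOf E v, Finset.mem_image_of_mem _ (Finset.mem_univ v)⟩, ?_⟩
      funext e'
      have he' : e'.1 = ((edgeEquiv E).symm e').1.image (unitOf E) := by
        conv_lhs => rw [← (edgeEquiv E).apply_symm_apply e']
        rfl
      simp only [f, LinearEquiv.funCongrLeft_apply, LinearMap.funLeft_apply,
        Matrix.transpose_apply, contractIncidence, incidence]
      rw [he']
      simp only [unit_mem_image_iff E ((edgeEquiv E).symm e').2]
    · rintro ⟨W, rfl⟩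
      obtain ⟨v, _, hv⟩ := Finset.mem_image.mp W.2
      refine ⟨((incidence E).transpose) v, ⟨v, rfl⟩, ?_⟩
      funext e'
      have he' : e'.1 = ((edgeEquiv E).symm e').1.image (unitOf E) := by
        conv_lhs => rw [← (edgeEquiv E).apply_symm_apply e']
        rfl
      simp only [f, LinearEquiv.funCongrLeft_apply, LinearMap.funLeft_apply,
        Matrix.transpose_apply, contractIncidence, incidence]
      rw [he', ← hv]
      simp only [unit_mem_image_iff E ((edgeEquiv E).symm e').2]
  have hmap := LinearEquiv.finrank_map_eq f (Submodule.span ℂ (Set.range ((incidence E).transpose)))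
  rw [Submodule.map_span] at hmap
  simp only [LinearEquiv.coe_coe] at hmap
  have h3 := congrArg (fun s : Set ({e' // e' ∈ contractEdges E} → ℂ) => Module.finrank ℂ (Submodule.span ℂ s)) himg
  exact hmap.symm.trans h3

/-- Let `H` be a hypergraph with set of units `𝔘(H)`.  The dimension of the null space
of `B_H` equals the dimension of the null space of `B_{H/𝓡_u(H)}` plus
`|V(H)| − |𝔘(H)|`. -/
theorem stmt15 {V : Type*} [Fintype V] [DecidableEq V]
    (E : Finset (Finset V)) (hE : ∀ e ∈ E, e.Nonempty) :
    Module.finrank ℂ (LinearMap.ker (incidence E).mulVecLin) =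
      Module.finrank ℂ (LinearMap.ker (contractIncidence E).mulVecLin) +
        (Fintype.card V - (unitsFinset E).card) := by
  have h1 := LinearMap.finrank_range_add_finrank_ker (incidence E).mulVecLin
  have h2 := LinearMap.finrank_range_add_finrank_ker (contractIncidence E).mulVecLin
  rw [Module.finrank_pi] at h1 h2
  have hcard : Fintype.card {W // W ∈ unitsFinset E} = (unitsFinset E).card :=
    Fintype.card_coe _
  have hr := rank_eq E
  have hle : (unitsFinset E).card ≤ Fintype.card V := by
    calc (unitsFinset E).card ≤ Finset.univ.card := Finset.card_image_le
      _ = Fintype.card V := Finset.card_univ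
  omega
end
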